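/- For every 0 < η < 1, the function g_η(x) := |x| − ψ_η(x) is nondecreasing on [0, ∞): for all 0 ≤ x ≤ y one has x − ψ_η(x) ≤ y − ψ_η(y). -/

import Mathlib

/-- The auxiliary function ψ_η from Appendix A of the paper. -/
noncomputable def psi (η : ℝ) (x : ℝ) : ℝ :=
  (2 / Real.log (1 / η)) *
    ∫ y in (0:ℝ)..|x|,
      ∫ z in (0:ℝ)..y, (1 / z) * Set.indicator (Set.Icc η (Real.sqrt η)) (fun _ => (1:ℝ)) z

/-- For , the function  is nondecreasing on . -/
theorem g_eta_monotone (η : ℝ) (hη0 : 0 < η) (hη1 : η < 1) :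
    ∀ x y : ℝ, 0 ≤ x → x ≤ y → x - psi η x ≤ y - psi η y := by
  intro x y hx hxy
  have hy : 0 ≤ y := le_trans hx hxy
  set L := Real.log (1 / η) with hL
  have hL0 : 0 < L := Real.log_pos (by rw [lt_div_iff₀ hη0]; linarith)
  set f : ℝ → ℝ := Set.indicator (Set.Icc η (Real.sqrt η)) (fun z => 1 / z) with hf
  have hfeq : ∀ z, (1 / z) * Set.indicator (Set.Icc η (Real.sqrt η)) (fun _ => (1:ℝ)) z = f z := by
    intro z
    by_cases h : z ∈ Set.Icc η (Real.sqrt η) <;>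
      simp [hf, Set.indicator_of_mem, Set.indicator_of_notMem, h]
  have hsq : η ≤ Real.sqrt η := by
    nlinarith [Real.sq_sqrt hη0.le, Real.sqrt_nonneg η, Real.sqrt_le_one.mpr hη1.le]
  have hint : MeasureTheory.Integrable f := by
    rw [hf, MeasureTheory.integrable_indicator_iff measurableSet_Icc]
    apply ContinuousOn.integrableOn_Icc
    exact continuousOn_const.div continuousOn_id
      (fun z hz => ne_of_gt (lt_of_lt_of_le hη0 hz.1))
  have hfnn : ∀ z, 0 ≤ f z := by
    intro z
    apply Set.indicator_nonneg
    intro z hz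
    exact div_nonneg zero_le_one (le_trans hη0.le hz.1)
  have htot : ∫ z, f z = L / 2 := by
    rw [hf, MeasureTheory.integral_indicator measurableSet_Icc,
      MeasureTheory.integral_Icc_eq_integral_Ioc,
      ← intervalIntegral.integral_of_le hsq,
      integral_one_div (by
        intro h
        rcases (Set.mem_uIcc.mp h) with h' | h'
        · exact absurd h'.1 (not_le.mpr hη0)
        · exact absurd h'.1 (not_le.mpr (Real.sqrt_pos.mpr hη0)))]
    rw [Real.log_div (by positivity) (ne_of_gt hη0), Real.log_sqrt hη0.le,
      hL, Real.log_div one_ne_zero (ne_of_gt hη0), Real.log_one]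
    ring
  have hF_le : ∀ t, 0 ≤ t → (∫ z in (0:ℝ)..t, f z) ≤ L / 2 := by
    intro t ht
    rw [intervalIntegral.integral_of_le ht]
    calc ∫ z in Set.Ioc (0:ℝ) t, f z ≤ ∫ z, f z :=
          MeasureTheory.setIntegral_le_integral hint (Filter.Eventually.of_forall hfnn)
      _ = L / 2 := htot
  have hFcont : Continuous (fun t => ∫ z in (0:ℝ)..t, f z) :=
    intervalIntegral.continuous_primitive (fun a b => hint.intervalIntegrable) 0
  have hpsi : ∀ u : ℝ, psi η u = (2 / L) * ∫ t in (0:ℝ)..|u|, ∫ z in (0:ℝ)..t, f z := by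
    intro u
    unfold psi
    rw [← hL]
    congr 1
    apply intervalIntegral.integral_congr
    intro t _
    apply intervalIntegral.integral_congr
    intro z _
    exact hfeq z
  rw [hpsi x, hpsi y, abs_of_nonneg hx, abs_of_nonneg hy]
  have hdiff : (∫ t in (0:ℝ)..y, ∫ z in (0:ℝ)..t, f z)
      - (∫ t in (0:ℝ)..x, ∫ z in (0:ℝ)..t, f z)
      = ∫ t in x..y, ∫ z in (0:ℝ)..t, f z :=
    intervalIntegral.integral_interval_sub_left (hFcont.intervalIntegrable 0 y)
      (hFcont.intervalIntegrable 0 x)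
  have key : (∫ t in x..y, ∫ z in (0:ℝ)..t, f z) ≤ (y - x) * (L / 2) := by
    calc (∫ t in x..y, ∫ z in (0:ℝ)..t, f z) ≤ ∫ _t in x..y, L / 2 :=
          intervalIntegral.integral_mono_on hxy (hFcont.intervalIntegrable x y)
            intervalIntegrable_const (fun t ht => hF_le t (le_trans hx ht.1))
      _ = (y - x) * (L / 2) := by
          simp [intervalIntegral.integral_const, smul_eq_mul]; ring
  have hmain : (2 / L) * ((∫ t in (0:ℝ)..y, ∫ z in (0:ℝ)..t, f z)
      - (∫ t in (0:ℝ)..x, ∫ z in (0:ℝ)..t, f z)) ≤ y - x := by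
    rw [hdiff]
    calc (2 / L) * (∫ t in x..y, ∫ z in (0:ℝ)..t, f z) ≤ (2 / L) * ((y - x) * (L / 2)) :=
          mul_le_mul_of_nonneg_left key (by positivity)
      _ = y - x := by field_simp
  have hexp := mul_sub (2 / L) (∫ t in (0:ℝ)..y, ∫ z in (0:ℝ)..t, f z)
    (∫ t in (0:ℝ)..x, ∫ z in (0:ℝ)..t, f z)
  linarith [hmain, hexp.symm ▸ hmain]
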